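/- arXiv:1604.07750 — 2 statements merged into one kernel-verified Lean document; each statement's English description precedes it below -/
import Mathlib

section
/- Let $Y$ and $Y'$ be independent nonnegative random variables, both regularly varying with the same index $\alpha' > 0$. Then the product $YY'$ is regularly varying with index $\alpha'$: there exists a slowly varying function $L_1$ such that $\P(YY' > x) = x^{-\alpha'} L_1(x)$. -/
open MeasureTheory ProbabilityTheory Real Set Filter

/-- A function `L : ℝ → ℝ` is slowly varying (at infinity) if `L(tx)/L(x) → 1` as
`x → ∞` for every `t > 0`. -/
def SlowlyVarying (L : ℝ → ℝ) : Prop :=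
  ∀ t : ℝ, 0 < t → Tendsto (fun x => L (t * x) / L x) atTop (nhds 1)

open scoped ENNReal NNReal

lemma ratio_bounds {Ω : Type*} [MeasurableSpace Ω] (μ : Measure Ω)
    (Y : Ω → ℝ) (α' : ℝ) (hα' : 0 < α') (L : ℝ → ℝ) (hL : SlowlyVarying L)
    (htail : ∀ x : ℝ, 0 < x → μ {ω | Y ω > x} = ENNReal.ofReal (x ^ (-α') * L x))
    (hpos : ∀ x : ℝ, 0 < x → μ {ω | Y ω > x} ≠ 0) (c ε : ℝ) (hc : 0 < c) (hε : 0 < ε) :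
    ∀ᶠ u in atTop, μ {ω | Y ω > c * u} ≤ ENNReal.ofReal (c ^ (-α') + ε) * μ {ω | Y ω > u}
      ∧ ENNReal.ofReal (c ^ (-α') - ε) * μ {ω | Y ω > u} ≤ μ {ω | Y ω > c * u} := by
  have hLpos : ∀ x : ℝ, 0 < x → 0 < L x := by
    intro x hx
    have h1 := hpos x hx
    rw [htail x hx] at h1
    have h2 : 0 < x ^ (-α') * L x := by
      rcases lt_or_ge 0 (x ^ (-α') * L x) with h | h
      · exact h
      · exact absurd (ENNReal.ofReal_eq_zero.mpr h) h1
    have h3 : 0 < x ^ (-α') := Real.rpow_pos_of_pos hx _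
    nlinarith
  set δ := ε * c ^ α' with hδdef
  have hδ : 0 < δ := mul_pos hε (Real.rpow_pos_of_pos hc _)
  have h1 := hL c hc
  have h2 : ∀ᶠ u in atTop, |L (c * u) / L u - 1| < δ := by
    have := Metric.tendsto_nhds.mp h1 δ hδ
    simpa [Real.dist_eq] using this
  have hckey : c ^ (-α') * c ^ α' = 1 := by
    rw [← Real.rpow_add hc]; simp
  filter_upwards [h2, eventually_gt_atTop 0] with u hu hu0
  have hcu : 0 < c * u := mul_pos hc hu0
  have hLu : 0 < L u := hLpos u hu0
  have hub : L (c * u) ≤ (1 + δ) * L u := by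
    have h3 := (abs_lt.mp hu).2
    have h4 : L (c * u) / L u < 1 + δ := by linarith
    rw [div_lt_iff₀ hLu] at h4; linarith
  have hlb : (1 - δ) * L u ≤ L (c * u) := by
    have := (abs_lt.mp hu).1
    have : 1 - δ < L (c * u) / L u := by linarith
    rw [lt_div_iff₀ hLu] at this; linarith
  have hmul : (c * u) ^ (-α') = c ^ (-α') * u ^ (-α') := Real.mul_rpow hc.le hu0.le
  have hcpos : (0:ℝ) < c ^ (-α') := Real.rpow_pos_of_pos hc _
  have hupos : (0:ℝ) < u ^ (-α') := Real.rpow_pos_of_pos hu0 _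
  constructor
  · rw [htail _ hcu, htail _ hu0, ← ENNReal.ofReal_mul (by positivity)]
    apply ENNReal.ofReal_le_ofReal
    rw [hmul]
    have hkey : c ^ (-α') * δ = ε := by
      rw [hδdef]; nlinarith [hckey]
    calc c ^ (-α') * u ^ (-α') * L (c * u)
        ≤ c ^ (-α') * u ^ (-α') * ((1 + δ) * L u) := by
          apply mul_le_mul_of_nonneg_left hub (by positivity)
      _ = (c ^ (-α') + ε) * (u ^ (-α') * L u) := by
          rw [← hkey]; ring
  · rcases le_or_gt (c ^ (-α') - ε) 0 with h | h
    · rw [ENNReal.ofReal_eq_zero.mpr h, zero_mul]; exact zero_le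
    · rw [htail _ hcu, htail _ hu0, ← ENNReal.ofReal_mul h.le]
      apply ENNReal.ofReal_le_ofReal
      rw [hmul]
      have hkey : c ^ (-α') * δ = ε := by
        rw [hδdef]; nlinarith [hckey]
      calc (c ^ (-α') - ε) * (u ^ (-α') * L u)
          = c ^ (-α') * u ^ (-α') * ((1 - δ) * L u) := by rw [← hkey]; ring
        _ ≤ c ^ (-α') * u ^ (-α') * L (c * u) := by
            apply mul_le_mul_of_nonneg_left hlb (by positivity)

lemma core_bounded {Ω : Type*} [MeasurableSpace Ω] (μ : Measure Ω) [IsProbabilityMeasure μ]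
    (X Z : Ω → ℝ) (hX : Measurable X) (hZ : Measurable Z) (hXnn : ∀ ω, 0 ≤ X ω)
    (hindep : IndepFun X Z μ) (α' : ℝ) (hα' : 0 < α') (L' : ℝ → ℝ) (hL' : SlowlyVarying L')
    (htailZ : ∀ x : ℝ, 0 < x → μ {ω | Z ω > x} = ENNReal.ofReal (x ^ (-α') * L' x))
    (hZpos : ∀ x : ℝ, 0 < x → μ {ω | Z ω > x} ≠ 0)
    (x₀ : ℝ) (hx₀ : 0 < x₀) (hXbdd : μ {ω | X ω > x₀} = 0)
    (t ε : ℝ) (ht : 1 ≤ t) (hε : 0 < ε) :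
    ∀ᶠ x in atTop,
      μ {ω | X ω * Z ω > t * x} ≤ ENNReal.ofReal (t ^ (-α') + ε) * μ {ω | X ω * Z ω > x}
      ∧ ENNReal.ofReal (t ^ (-α') - ε) * μ {ω | X ω * Z ω > x} ≤ μ {ω | X ω * Z ω > t * x} := by
  have ht0 : (0:ℝ) < t := lt_of_lt_of_le one_pos ht
  obtain ⟨u₀, hu₀⟩ := eventually_atTop.mp
    (ratio_bounds μ Z α' hα' L' hL' htailZ hZpos t ε ht0 hε)
  have hmap : μ.map (fun ω => (X ω, Z ω)) = (μ.map X).prod (μ.map Z) :=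
    (indepFun_iff_map_prod_eq_prod_map_map hX.aemeasurable hZ.aemeasurable).mp hindep
  have hPZ : IsProbabilityMeasure (μ.map Z) := Measure.isProbabilityMeasure_map hZ.aemeasurable
  have hS : ∀ z : ℝ, MeasurableSet {p : ℝ × ℝ | p.1 * p.2 > z} := fun z =>
    measurableSet_lt measurable_const (measurable_fst.mul measurable_snd)
  have hrep : ∀ z : ℝ, μ {ω | X ω * Z ω > z}
      = ∫⁻ y, (μ.map Z) {v | y * v > z} ∂(μ.map X) := by
    intro z
    have he : {ω | X ω * Z ω > z} = (fun ω => (X ω, Z ω)) ⁻¹' {p : ℝ × ℝ | p.1 * p.2 > z} := rfl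
    rw [he, ← Measure.map_apply (hX.prodMk hZ) (hS z), hmap, Measure.prod_apply (hS z)]
    rfl
  have hmeasint : ∀ z : ℝ, Measurable fun y => (μ.map Z) {v | y * v > z} := fun z =>
    measurable_measure_prodMk_left (hS z)
  have haeX : ∀ᵐ y ∂(μ.map X), y ∈ Icc (0:ℝ) x₀ := by
    refine (ae_map_iff hX.aemeasurable measurableSet_Icc).mpr ?_
    have h1 : ∀ᵐ ω ∂μ, X ω ≤ x₀ := by
      rw [ae_iff]
      simpa [not_le] using hXbdd
    exact h1.mono fun ω h => ⟨hXnn ω, h⟩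
  filter_upwards [eventually_ge_atTop (u₀ * x₀), eventually_gt_atTop 0] with x hx1 hx2
  have hpt : ∀ y ∈ Icc (0:ℝ) x₀,
      (μ.map Z) {v | y * v > t * x} ≤ ENNReal.ofReal (t ^ (-α') + ε) * (μ.map Z) {v | y * v > x}
      ∧ ENNReal.ofReal (t ^ (-α') - ε) * (μ.map Z) {v | y * v > x}
        ≤ (μ.map Z) {v | y * v > t * x} := by
    rintro y ⟨hy0, hyx₀⟩
    rcases eq_or_lt_of_le hy0 with hy | hy
    · have h0 : ∀ z : ℝ, 0 < z → {v : ℝ | y * v > z} = ∅ := by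
        intro z hz; ext v; simp [← hy, hz.not_gt, not_lt.mpr hz.le]
      rw [h0 _ (mul_pos ht0 hx2), h0 _ hx2]
      simp
    · have hset : ∀ z : ℝ, {v : ℝ | y * v > z} = Ioi (z / y) := by
        intro z; ext v
        simp only [mem_setOf_eq, mem_Ioi]
        rw [div_lt_iff₀ hy, mul_comm]
      have hmapIoi : ∀ u : ℝ, (μ.map Z) (Ioi u) = μ {ω | Z ω > u} := by
        intro u; rw [Measure.map_apply hZ measurableSet_Ioi]; rfl
      have hu : u₀ ≤ x / y := by
        have h1 : x / x₀ ≤ x / y := div_le_div_of_nonneg_left hx2.le hy hyx₀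
        have h2 : u₀ ≤ x / x₀ := (le_div_iff₀ hx₀).mpr hx1
        linarith
      have := hu₀ (x / y) hu
      rw [hset, hset, hmapIoi, hmapIoi, mul_div_assoc]
      exact this
  refine ⟨?_, ?_⟩
  · rw [hrep (t * x), hrep x, ← lintegral_const_mul _ (hmeasint x)]
    exact lintegral_mono_ae (haeX.mono fun y hy => (hpt y hy).1)
  · rw [hrep (t * x), hrep x, ← lintegral_const_mul _ (hmeasint x)]
    exact lintegral_mono_ae (haeX.mono fun y hy => (hpt y hy).2)

lemma tendsto_sqrt_atTop' : Tendsto Real.sqrt atTop atTop := by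
  rw [tendsto_atTop_atTop]
  intro b
  refine ⟨(max 0 b) ^ 2, fun a ha => ?_⟩
  have h0 : (0:ℝ) ≤ max 0 b := le_max_left _ _
  calc b ≤ max 0 b := le_max_right _ _
    _ = Real.sqrt ((max 0 b) ^ 2) := (Real.sqrt_sq h0).symm
    _ ≤ Real.sqrt a := Real.sqrt_le_sqrt ha


set_option maxHeartbeats 1000000 in
lemma corner_small {Ω : Type*} [MeasurableSpace Ω] (μ : Measure Ω) [IsProbabilityMeasure μ]
    (Y Y' : Ω → ℝ) (hY : Measurable Y) (hY' : Measurable Y')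
    (hindep : IndepFun Y Y' μ)
    (α' : ℝ) (hα' : 0 < α') (L L' : ℝ → ℝ) (hL : SlowlyVarying L) (hL' : SlowlyVarying L')
    (htailY : ∀ x : ℝ, 0 < x → μ {ω | Y ω > x} = ENNReal.ofReal (x ^ (-α') * L x))
    (htailY' : ∀ x : ℝ, 0 < x → μ {ω | Y' ω > x} = ENNReal.ofReal (x ^ (-α') * L' x))
    (hYpos : ∀ x : ℝ, 0 < x → μ {ω | Y ω > x} ≠ 0)
    (hY'pos : ∀ x : ℝ, 0 < x → μ {ω | Y' ω > x} ≠ 0)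
    (ε' : ℝ) (hε' : 0 < ε') :
    ∀ᶠ x in atTop, μ {ω | Y ω > Real.sqrt x} * μ {ω | Y' ω > Real.sqrt x}
      ≤ ENNReal.ofReal ε' * μ {ω | Y ω * Y' ω > x} := by
  classical
  set γ : ℝ := 1 - (2:ℝ) ^ (-α') with hγdef
  have h2α : (2:ℝ) ^ (-α') < 1 :=
    Real.rpow_lt_one_of_one_lt_of_neg one_lt_two (by linarith)
  have h2αpos : (0:ℝ) < (2:ℝ) ^ (-α') := Real.rpow_pos_of_pos two_pos _
  have hγ : 0 < γ := by simp only [hγdef]; linarith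
  have hγ1 : γ < 1 := by simp only [hγdef]; linarith
  set K : ℕ := ⌈2 / (ε' * γ)⌉₊ + 1 with hKdef
  have hKge : 2 / (ε' * γ) ≤ (K : ℝ) := by
    have h1 := Nat.le_ceil (2 / (ε' * γ))
    have h2 : (⌈2 / (ε' * γ)⌉₊ : ℝ) ≤ (K : ℝ) := by
      rw [hKdef]; push_cast; linarith
    linarith
  have hK : 1 ≤ ε' + ε' * K * (γ / 2) := by
    have h3 : (0:ℝ) ≤ ε' * γ / 2 := by positivity
    have h4 := mul_le_mul_of_nonneg_left hKge h3
    have h5 : ε' * γ / 2 * (2 / (ε' * γ)) = 1 := by field_simp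
    nlinarith
  set M : ℝ := (2:ℝ) ^ (((K:ℝ) + 1) * α') with hMdef
  have hM1 : (1:ℝ) ≤ M := by
    rw [hMdef]
    have : (2:ℝ) ^ (0:ℝ) ≤ (2:ℝ) ^ (((K:ℝ) + 1) * α') :=
      Real.rpow_le_rpow_of_exponent_le one_le_two (by positivity)
    simpa using this
  set δ : ℝ := γ / (8 * M) with hδdef
  have hδ : 0 < δ := by rw [hδdef]; positivity
  have hδM : δ * M = γ / 8 := by rw [hδdef]; field_simp
  have hδsmall : δ ≤ 1 / 8 := by
    rw [hδdef, div_le_div_iff₀ (by positivity) (by norm_num)]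
    nlinarith
  -- the eventual ratio estimates, at the square root
  have hev : ∀ᶠ u in atTop, ∀ k ∈ Finset.range K,
      (μ {ω | Y ω > (2:ℝ) ^ (-((k:ℝ)+1)) * u}
          ≤ ENNReal.ofReal (((2:ℝ) ^ (-((k:ℝ)+1))) ^ (-α') + δ) * μ {ω | Y ω > u}
        ∧ ENNReal.ofReal (((2:ℝ) ^ (-((k:ℝ)+1))) ^ (-α') - δ) * μ {ω | Y ω > u}
          ≤ μ {ω | Y ω > (2:ℝ) ^ (-((k:ℝ)+1)) * u})
      ∧ (μ {ω | Y ω > (2:ℝ) ^ (-(k:ℝ)) * u}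
          ≤ ENNReal.ofReal (((2:ℝ) ^ (-(k:ℝ))) ^ (-α') + δ) * μ {ω | Y ω > u}
        ∧ ENNReal.ofReal (((2:ℝ) ^ (-(k:ℝ))) ^ (-α') - δ) * μ {ω | Y ω > u}
          ≤ μ {ω | Y ω > (2:ℝ) ^ (-(k:ℝ)) * u})
      ∧ (μ {ω | Y' ω > (2:ℝ) ^ ((k:ℝ)+1) * u}
          ≤ ENNReal.ofReal (((2:ℝ) ^ ((k:ℝ)+1)) ^ (-α') + δ) * μ {ω | Y' ω > u}
        ∧ ENNReal.ofReal (((2:ℝ) ^ ((k:ℝ)+1)) ^ (-α') - δ) * μ {ω | Y' ω > u}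
          ≤ μ {ω | Y' ω > (2:ℝ) ^ ((k:ℝ)+1) * u}) := by
    rw [eventually_all_finset]
    intro k _
    exact (ratio_bounds μ Y α' hα' L hL htailY hYpos _ δ
        (Real.rpow_pos_of_pos two_pos _) hδ).and
      ((ratio_bounds μ Y α' hα' L hL htailY hYpos _ δ
        (Real.rpow_pos_of_pos two_pos _) hδ).and
      (ratio_bounds μ Y' α' hα' L' hL' htailY' hY'pos _ δ
        (Real.rpow_pos_of_pos two_pos _) hδ))
  have hmap : μ.map (fun ω => (Y ω, Y' ω)) = (μ.map Y).prod (μ.map Y') :=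
    (indepFun_iff_map_prod_eq_prod_map_map hY.aemeasurable hY'.aemeasurable).mp hindep
  have hprod : ∀ s t : Set ℝ, MeasurableSet s → MeasurableSet t →
      μ ((fun ω => (Y ω, Y' ω)) ⁻¹' (s ×ˢ t)) = (μ.map Y) s * (μ.map Y') t := by
    intro s t hs ht
    rw [← Measure.map_apply (hY.prodMk hY') (hs.prod ht), hmap, Measure.prod_prod]
  have hYIoi : ∀ u : ℝ, (μ.map Y) (Ioi u) = μ {ω | Y ω > u} := by
    intro u; rw [Measure.map_apply hY measurableSet_Ioi]; rfl
  have hY'Ioi : ∀ u : ℝ, (μ.map Y') (Ioi u) = μ {ω | Y' ω > u} := by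
    intro u; rw [Measure.map_apply hY' measurableSet_Ioi]; rfl
  filter_upwards [tendsto_sqrt_atTop'.eventually hev, eventually_ge_atTop 1] with x hx hx1
  set r := Real.sqrt x with hrdef
  have hr0 : 0 < r := Real.sqrt_pos.mpr (by linarith)
  have hrr : r * r = x := Real.mul_self_sqrt (by linarith)
  set a : ℕ → ℝ := fun k => (2:ℝ) ^ (-((k:ℝ)+1)) * r with hadef
  set b : ℕ → ℝ := fun k => (2:ℝ) ^ (-(k:ℝ)) * r with hbdef
  set c : ℕ → ℝ := fun k => (2:ℝ) ^ ((k:ℝ)+1) * r with hcdef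
  have ha_eq : ∀ k : ℕ, (2:ℝ) ^ (-((k:ℝ)+1)) * r = a k := fun k => rfl
  have hb_eq : ∀ k : ℕ, (2:ℝ) ^ (-(k:ℝ)) * r = b k := fun k => rfl
  have hc_eq : ∀ k : ℕ, (2:ℝ) ^ ((k:ℝ)+1) * r = c k := fun k => rfl
  set Strip : ℕ → Set Ω :=
    fun k => (fun ω => (Y ω, Y' ω)) ⁻¹' ((Ioc (a k) (b k)) ×ˢ (Ioi (c k))) with hStripdef
  set E3 : Set Ω := (fun ω => (Y ω, Y' ω)) ⁻¹' ((Ioi r) ×ˢ (Ioi r)) with hE3def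
  have hμE3 : μ E3 = μ {ω | Y ω > r} * μ {ω | Y' ω > r} := by
    rw [hE3def, hprod _ _ measurableSet_Ioi measurableSet_Ioi, hYIoi, hY'Ioi]
  have hab : ∀ k : ℕ, a k ≤ b k := by
    intro k
    apply mul_le_mul_of_nonneg_right _ hr0.le
    apply Real.rpow_le_rpow_of_exponent_le one_le_two (by push_cast; linarith)
  have hμStrip : ∀ k : ℕ, μ (Strip k) = (μ.map Y) (Ioc (a k) (b k)) * μ {ω | Y' ω > c k} := by
    intro k
    rw [hStripdef, hprod _ _ measurableSet_Ioc measurableSet_Ioi, hY'Ioi]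
  have hIoc : ∀ k : ℕ, (μ.map Y) (Ioc (a k) (b k)) + μ {ω | Y ω > b k} = μ {ω | Y ω > a k} := by
    intro k
    rw [← hYIoi, ← hYIoi, ← measure_union (Ioc_disjoint_Ioi le_rfl) measurableSet_Ioi,
      Ioc_union_Ioi_eq_Ioi (hab k)]
  -- per-strip lower bound
  have hstripk : ∀ k ∈ Finset.range K,
      ENNReal.ofReal (γ / 2) * (μ {ω | Y ω > r} * μ {ω | Y' ω > r}) ≤ μ (Strip k) := by
    intro k hk
    have hkK : (k : ℝ) < K := by exact_mod_cast Finset.mem_range.mp hk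
    obtain ⟨⟨hA1u, hA1l⟩, ⟨hA2u, hA2l⟩, ⟨hA3u, hA3l⟩⟩ := hx k hk
    rw [ha_eq] at hA1u hA1l
    rw [hb_eq] at hA2u hA2l
    rw [hc_eq] at hA3u hA3l
    set pk : ℝ := (2:ℝ) ^ ((k:ℝ) * α') with hpkdef
    set pk1 : ℝ := (2:ℝ) ^ (((k:ℝ)+1) * α') with hpk1def
    set qk1 : ℝ := (2:ℝ) ^ (-(((k:ℝ)+1) * α')) with hqk1def
    have hrw1 : ((2:ℝ) ^ (-((k:ℝ)+1))) ^ (-α') = pk1 := by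
      rw [hpk1def, ← Real.rpow_mul (by norm_num : (0:ℝ) ≤ 2)]
      congr 1; ring
    have hrw2 : ((2:ℝ) ^ (-(k:ℝ))) ^ (-α') = pk := by
      rw [hpkdef, ← Real.rpow_mul (by norm_num : (0:ℝ) ≤ 2)]
      congr 1; ring
    have hrw3 : ((2:ℝ) ^ ((k:ℝ)+1)) ^ (-α') = qk1 := by
      rw [hqk1def, ← Real.rpow_mul (by norm_num : (0:ℝ) ≤ 2)]
      congr 1; ring
    rw [hrw1] at hA1l
    rw [hrw2] at hA2u
    rw [hrw3] at hA3u hA3l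
    have hpq1 : pk1 * qk1 = 1 := by
      rw [hpk1def, hqk1def, ← Real.rpow_add two_pos]; simp
    have hpq2 : pk * qk1 = 1 - γ := by
      rw [hpkdef, hqk1def, ← Real.rpow_add two_pos, hγdef]
      norm_num
      congr 1; ring
    have hb1 : pk ≤ M := by
      rw [hpkdef, hMdef]
      apply Real.rpow_le_rpow_of_exponent_le one_le_two
      nlinarith
    have hb2 : pk1 ≤ M := by
      rw [hpk1def, hMdef]
      apply Real.rpow_le_rpow_of_exponent_le one_le_two
      nlinarith
    have hb3 : qk1 ≤ 1 := by
      apply Real.rpow_le_one_of_one_le_of_nonpos one_le_two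
      nlinarith
    have hq1pos : (2:ℝ)^(-(((K:ℝ)+1) * α')) ≤ qk1 := by
      rw [hqk1def]
      apply Real.rpow_le_rpow_of_exponent_le one_le_two
      nlinarith
    have hMinv : (2:ℝ)^(-(((K:ℝ)+1) * α')) = M⁻¹ := by
      rw [hMdef, Real.rpow_neg (by norm_num : (0:ℝ) ≤ 2)]
    have hδq : δ < qk1 := by
      have h1 : δ < M⁻¹ := by
        rw [hδdef, div_lt_iff₀ (by positivity), inv_mul_eq_div]
        have h8 : (8:ℝ) * M / M = 8 := by field_simp
        rw [h8]; linarith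
      rw [hMinv] at hq1pos; linarith
    have hpk1one : (1:ℝ) ≤ pk1 := by
      rw [hpk1def]
      have : (2:ℝ) ^ (0:ℝ) ≤ (2:ℝ) ^ (((k:ℝ)+1) * α') :=
        Real.rpow_le_rpow_of_exponent_le one_le_two (by positivity)
      simpa using this
    have hpkpos : (0:ℝ) < pk := Real.rpow_pos_of_pos two_pos _
    have hqk1pos : (0:ℝ) < qk1 := Real.rpow_pos_of_pos two_pos _
    -- the key real inequality
    have hreal : γ / 2 + (pk + δ) * (qk1 + δ) ≤ (pk1 - δ) * (qk1 - δ) := by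
      have hcoef : δ * (pk1 + pk + 2 * qk1) ≤ δ * (4 * M) := by
        apply mul_le_mul_of_nonneg_left _ hδ.le
        linarith
      nlinarith [hcoef, hδM, hpq1, hpq2]
    -- assemble in ℝ≥0∞
    have hfin : μ {ω | Y ω > b k} * μ {ω | Y' ω > c k} ≠ ⊤ :=
      ENNReal.mul_ne_top (measure_ne_top μ _) (measure_ne_top μ _)
    have step1 : ENNReal.ofReal (γ/2) * (μ {ω | Y ω > r} * μ {ω | Y' ω > r})
          + μ {ω | Y ω > b k} * μ {ω | Y' ω > c k}
        ≤ μ {ω | Y ω > a k} * μ {ω | Y' ω > c k} := by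
      calc ENNReal.ofReal (γ/2) * (μ {ω | Y ω > r} * μ {ω | Y' ω > r})
            + μ {ω | Y ω > b k} * μ {ω | Y' ω > c k}
          ≤ ENNReal.ofReal (γ/2) * (μ {ω | Y ω > r} * μ {ω | Y' ω > r})
            + (ENNReal.ofReal (pk + δ) * μ {ω | Y ω > r})
              * (ENNReal.ofReal (qk1 + δ) * μ {ω | Y' ω > r}) :=
            add_le_add_right (mul_le_mul' hA2u hA3u) _
        _ = ENNReal.ofReal (γ/2 + (pk + δ) * (qk1 + δ))
            * (μ {ω | Y ω > r} * μ {ω | Y' ω > r}) := by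
            have hof : ENNReal.ofReal (γ/2 + (pk + δ) * (qk1 + δ))
                = ENNReal.ofReal (γ/2)
                  + ENNReal.ofReal (pk + δ) * ENNReal.ofReal (qk1 + δ) := by
              rw [ENNReal.ofReal_add (by positivity) (by positivity),
                ENNReal.ofReal_mul (by positivity)]
            rw [hof, add_mul, mul_mul_mul_comm]
        _ ≤ ENNReal.ofReal ((pk1 - δ) * (qk1 - δ))
            * (μ {ω | Y ω > r} * μ {ω | Y' ω > r}) :=
            mul_le_mul_left (ENNReal.ofReal_le_ofReal hreal) _
        _ = (ENNReal.ofReal (pk1 - δ) * μ {ω | Y ω > r})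
            * (ENNReal.ofReal (qk1 - δ) * μ {ω | Y' ω > r}) := by
            rw [ENNReal.ofReal_mul (by nlinarith), mul_mul_mul_comm]
        _ ≤ μ {ω | Y ω > a k} * μ {ω | Y' ω > c k} := mul_le_mul' hA1l hA3l
    rw [hμStrip k]
    have h2 : μ {ω | Y ω > a k} * μ {ω | Y' ω > c k}
        = (μ.map Y) (Ioc (a k) (b k)) * μ {ω | Y' ω > c k}
          + μ {ω | Y ω > b k} * μ {ω | Y' ω > c k} := by
      rw [← hIoc k, add_mul]
    rw [h2] at step1
    exact (ENNReal.add_le_add_iff_right hfin).mp step1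
  -- disjointness and inclusion
  have hmeasStrip : ∀ k : ℕ, MeasurableSet (Strip k) := fun k =>
    (hY.prodMk hY') (measurableSet_Ioc.prod measurableSet_Ioi)
  have hsubStrip : ∀ k : ℕ, Strip k ⊆ {ω | Y ω * Y' ω > x} := by
    intro k ω hω
    obtain ⟨⟨h1, h2⟩, h3⟩ := hω
    have hak : 0 < a k := by
      rw [hadef]; positivity
    have hck : 0 < c k := by
      rw [hcdef]; positivity
    have hmul : a k * c k < Y ω * Y' ω := mul_lt_mul'' h1 h3 hak.le hck.le
    have hac : a k * c k = x := by
      have h5 : (2:ℝ)^(-((k:ℝ)+1)) * (2:ℝ)^((k:ℝ)+1) = 1 := by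
        rw [← Real.rpow_add two_pos, neg_add_cancel, Real.rpow_zero]
      show (2:ℝ) ^ (-((k:ℝ)+1)) * r * ((2:ℝ) ^ ((k:ℝ)+1) * r) = x
      rw [mul_mul_mul_comm, h5, one_mul, hrr]
    simpa [hac] using hmul
  have hsubE3 : E3 ⊆ {ω | Y ω * Y' ω > x} := by
    intro ω hω
    obtain ⟨h1, h2⟩ := hω
    have := mul_lt_mul'' h1 h2 hr0.le hr0.le
    simpa [hrr] using this
  have hdisjS : (↑(Finset.range K) : Set ℕ).PairwiseDisjoint Strip := by
    intro i hi j hj hij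
    wlog hlt : i < j generalizing i j
    · exact (this hj hi hij.symm (by omega)).symm
    apply Set.disjoint_left.mpr
    rintro ω ⟨⟨hai, _⟩, _⟩ ⟨⟨_, hbj⟩, _⟩
    have hba : b j ≤ a i := by
      rw [hbdef, hadef]
      show (2:ℝ) ^ (-(j:ℝ)) * r ≤ (2:ℝ) ^ (-((i:ℝ)+1)) * r
      apply mul_le_mul_of_nonneg_right _ hr0.le
      apply Real.rpow_le_rpow_of_exponent_le one_le_two
      have : (i:ℝ) + 1 ≤ (j:ℝ) := by exact_mod_cast hlt
      linarith
    exact absurd (lt_of_le_of_lt (le_trans hbj hba) hai) (lt_irrefl _)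
  have hdisjE3 : Disjoint E3 (⋃ k ∈ Finset.range K, Strip k) := by
    apply Set.disjoint_left.mpr
    rintro ω ⟨h1, _⟩ h2
    simp only [mem_iUnion] at h2
    obtain ⟨k, _, ⟨⟨_, hbk⟩, _⟩⟩ := h2
    have hbr : b k ≤ r := by
      rw [hbdef]
      show (2:ℝ) ^ (-(k:ℝ)) * r ≤ r
      have h4 : (2:ℝ) ^ (-(k:ℝ)) ≤ 1 :=
        Real.rpow_le_one_of_one_le_of_nonpos one_le_two (neg_nonpos.mpr (Nat.cast_nonneg k))
      exact le_trans (mul_le_mul_of_nonneg_right h4 hr0.le) (by rw [one_mul])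
    exact absurd (lt_of_le_of_lt (le_trans hbk hbr) h1) (lt_irrefl _)
  -- sum up
  have hsum : μ E3 + ∑ k ∈ Finset.range K, μ (Strip k) ≤ μ {ω | Y ω * Y' ω > x} := by
    rw [← measure_biUnion_finset hdisjS (fun k _ => hmeasStrip k),
      ← measure_union hdisjE3 ((Finset.range K).measurableSet_biUnion
        (fun k _ => hmeasStrip k))]
    apply measure_mono
    apply Set.union_subset hsubE3
    exact Set.iUnion₂_subset fun k _ => hsubStrip k
  have hsum2 : μ E3 + (K : ℝ≥0∞) * (ENNReal.ofReal (γ/2)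
      * (μ {ω | Y ω > r} * μ {ω | Y' ω > r})) ≤ μ {ω | Y ω * Y' ω > x} := by
    refine le_trans ?_ hsum
    apply add_le_add_right
    calc (K : ℝ≥0∞) * (ENNReal.ofReal (γ/2) * (μ {ω | Y ω > r} * μ {ω | Y' ω > r}))
        = ∑ _k ∈ Finset.range K,
          (ENNReal.ofReal (γ/2) * (μ {ω | Y ω > r} * μ {ω | Y' ω > r})) := by
          rw [Finset.sum_const, Finset.card_range, nsmul_eq_mul]
      _ ≤ ∑ k ∈ Finset.range K, μ (Strip k) := Finset.sum_le_sum hstripk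
  rw [hμE3] at hsum2
  -- conclude
  have hone : (1:ℝ≥0∞) ≤ ENNReal.ofReal ε' * (1 + (K : ℝ≥0∞) * ENNReal.ofReal (γ/2)) := by
    have he1 : ENNReal.ofReal ε' * (1 + (K : ℝ≥0∞) * ENNReal.ofReal (γ/2))
        = ENNReal.ofReal (ε' + ε' * K * (γ/2)) := by
      rw [mul_add, mul_one, ← ENNReal.ofReal_natCast K,
        ← ENNReal.ofReal_mul (by positivity : (0:ℝ) ≤ (K:ℝ)),
        ← ENNReal.ofReal_mul hε'.le, ← ENNReal.ofReal_add hε'.le (by positivity)]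
      ring_nf
    rw [he1, ← ENNReal.ofReal_one]
    exact ENNReal.ofReal_le_ofReal hK
  calc μ {ω | Y ω > r} * μ {ω | Y' ω > r}
      = 1 * (μ {ω | Y ω > r} * μ {ω | Y' ω > r}) := (one_mul _).symm
    _ ≤ (ENNReal.ofReal ε' * (1 + (K : ℝ≥0∞) * ENNReal.ofReal (γ/2)))
        * (μ {ω | Y ω > r} * μ {ω | Y' ω > r}) := mul_le_mul_left hone _
    _ = ENNReal.ofReal ε' * (μ {ω | Y ω > r} * μ {ω | Y' ω > r}
        + (K : ℝ≥0∞) * (ENNReal.ofReal (γ/2) * (μ {ω | Y ω > r} * μ {ω | Y' ω > r}))) := by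
        ring
    _ ≤ ENNReal.ofReal ε' * μ {ω | Y ω * Y' ω > x} := mul_le_mul_right hsum2 _

set_option maxHeartbeats 1000000 in
lemma core_main {Ω : Type*} [MeasurableSpace Ω] (μ : Measure Ω) [IsProbabilityMeasure μ]
    (Y Y' : Ω → ℝ) (hY : Measurable Y) (hY' : Measurable Y')
    (hYnn : ∀ ω, 0 ≤ Y ω) (hY'nn : ∀ ω, 0 ≤ Y' ω)
    (hindep : IndepFun Y Y' μ)
    (α' : ℝ) (hα' : 0 < α') (L L' : ℝ → ℝ) (hL : SlowlyVarying L) (hL' : SlowlyVarying L')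
    (htailY : ∀ x : ℝ, 0 < x → μ {ω | Y ω > x} = ENNReal.ofReal (x ^ (-α') * L x))
    (htailY' : ∀ x : ℝ, 0 < x → μ {ω | Y' ω > x} = ENNReal.ofReal (x ^ (-α') * L' x))
    (hYpos : ∀ x : ℝ, 0 < x → μ {ω | Y ω > x} ≠ 0)
    (hY'pos : ∀ x : ℝ, 0 < x → μ {ω | Y' ω > x} ≠ 0)
    (t ε : ℝ) (ht : 1 ≤ t) (hε : 0 < ε) :
    ∀ᶠ x in atTop,
      μ {ω | Y ω * Y' ω > t * x} ≤ ENNReal.ofReal (t ^ (-α') + ε) * μ {ω | Y ω * Y' ω > x}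
      ∧ ENNReal.ofReal (t ^ (-α') - ε) * μ {ω | Y ω * Y' ω > x}
        ≤ μ {ω | Y ω * Y' ω > t * x} := by
  classical
  have ht0 : (0:ℝ) < t := lt_of_lt_of_le one_pos ht
  obtain ⟨uF, huF⟩ := eventually_atTop.mp
    (ratio_bounds μ Y α' hα' L hL htailY hYpos t (ε/2) ht0 (half_pos hε))
  obtain ⟨uG, huG⟩ := eventually_atTop.mp
    (ratio_bounds μ Y' α' hα' L' hL' htailY' hY'pos t (ε/2) ht0 (half_pos hε))
  have hcorner := corner_small μ Y Y' hY hY' hindep α' hα' L L' hL hL' htailY htailY'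
    hYpos hY'pos (ε/2) (half_pos hε)
  have hmap : μ.map (fun ω => (Y ω, Y' ω)) = (μ.map Y).prod (μ.map Y') :=
    (indepFun_iff_map_prod_eq_prod_map_map hY.aemeasurable hY'.aemeasurable).mp hindep
  have hmap' : μ.map (fun ω => (Y' ω, Y ω)) = (μ.map Y').prod (μ.map Y) :=
    (indepFun_iff_map_prod_eq_prod_map_map hY'.aemeasurable hY.aemeasurable).mp hindep.symm
  have hYIoi : ∀ u : ℝ, (μ.map Y) (Ioi u) = μ {ω | Y ω > u} := by
    intro u; rw [Measure.map_apply hY measurableSet_Ioi]; rfl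
  have hY'Ioi : ∀ u : ℝ, (μ.map Y') (Ioi u) = μ {ω | Y' ω > u} := by
    intro u; rw [Measure.map_apply hY' measurableSet_Ioi]; rfl
  have haeY : ∀ᵐ y ∂(μ.map Y), 0 ≤ y :=
    (ae_map_iff hY.aemeasurable measurableSet_Ici).mpr (ae_of_all μ hYnn)
  have haeY' : ∀ᵐ w ∂(μ.map Y'), 0 ≤ w :=
    (ae_map_iff hY'.aemeasurable measurableSet_Ici).mpr (ae_of_all μ hY'nn)
  filter_upwards [tendsto_sqrt_atTop'.eventually_ge_atTop uF,
    tendsto_sqrt_atTop'.eventually_ge_atTop uG, hcorner, eventually_ge_atTop 1]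
    with x hruF hruG hCx hx1
  set r := Real.sqrt x with hrdef
  have hx0 : (0:ℝ) < x := by linarith
  have hr0 : 0 < r := Real.sqrt_pos.mpr hx0
  have hxr : x / r = r := Real.div_sqrt
  -- measurable product sets
  have hS1 : ∀ z : ℝ, MeasurableSet {p : ℝ × ℝ | p.2 * p.1 > z ∧ p.1 ≤ r} := fun z =>
    (measurableSet_lt measurable_const (measurable_snd.mul measurable_fst)).inter
      (measurableSet_le measurable_fst measurable_const)
  have hS2 : ∀ z : ℝ, MeasurableSet {p : ℝ × ℝ | p.1 * p.2 > z ∧ r < p.2 ∧ p.1 ≤ r} := by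
    intro z
    exact (measurableSet_lt measurable_const (measurable_fst.mul measurable_snd)).inter
      ((measurableSet_lt measurable_const measurable_snd).inter
        (measurableSet_le measurable_fst measurable_const))
  -- integral representations
  have hrep1 : ∀ z : ℝ, μ {ω | Y ω * Y' ω > z ∧ Y' ω ≤ r}
      = ∫⁻ w, (μ.map Y) {v | v * w > z ∧ w ≤ r} ∂(μ.map Y') := by
    intro z
    have he : {ω | Y ω * Y' ω > z ∧ Y' ω ≤ r}
        = (fun ω => (Y' ω, Y ω)) ⁻¹' {p : ℝ × ℝ | p.2 * p.1 > z ∧ p.1 ≤ r} := rfl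
    rw [he, ← Measure.map_apply (hY'.prodMk hY) (hS1 z), hmap', Measure.prod_apply (hS1 z)]
    rfl
  have hrep2 : ∀ z : ℝ, μ {ω | Y ω * Y' ω > z ∧ r < Y' ω ∧ Y ω ≤ r}
      = ∫⁻ y, (μ.map Y') {w | y * w > z ∧ r < w ∧ y ≤ r} ∂(μ.map Y) := by
    intro z
    have he : {ω | Y ω * Y' ω > z ∧ r < Y' ω ∧ Y ω ≤ r}
        = (fun ω => (Y ω, Y' ω)) ⁻¹' {p : ℝ × ℝ | p.1 * p.2 > z ∧ r < p.2 ∧ p.1 ≤ r} := rfl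
    rw [he, ← Measure.map_apply (hY.prodMk hY') (hS2 z), hmap, Measure.prod_apply (hS2 z)]
    rfl
  have hmeas1 : ∀ z : ℝ, Measurable fun w => (μ.map Y) {v | v * w > z ∧ w ≤ r} := by
    intro z
    have : IsProbabilityMeasure (μ.map Y) := Measure.isProbabilityMeasure_map hY.aemeasurable
    exact measurable_measure_prodMk_left (hS1 z)
  have hmeas2 : ∀ z : ℝ, Measurable fun y => (μ.map Y') {w | y * w > z ∧ r < w ∧ y ≤ r} := by
    intro z
    have : IsProbabilityMeasure (μ.map Y') := Measure.isProbabilityMeasure_map hY'.aemeasurable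
    exact measurable_measure_prodMk_left (hS2 z)
  -- pointwise comparisons for the E1 integrand
  have hpt1 : ∀ w : ℝ, 0 ≤ w →
      ((μ.map Y) {v | v * w > t * x ∧ w ≤ r}
        ≤ ENNReal.ofReal (t ^ (-α') + ε/2) * (μ.map Y) {v | v * w > x ∧ w ≤ r}
      ∧ ENNReal.ofReal (t ^ (-α') - ε/2) * (μ.map Y) {v | v * w > x ∧ w ≤ r}
        ≤ (μ.map Y) {v | v * w > t * x ∧ w ≤ r}) := by
    intro w hw0
    by_cases hwr : w ≤ r
    · rcases eq_or_lt_of_le hw0 with hw | hw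
      · have hempty : ∀ z : ℝ, 0 < z → {v : ℝ | v * w > z ∧ w ≤ r} = ∅ := by
          intro z hz; ext v; simp [← hw, hz.not_gt, not_lt.mpr hz.le]
        rw [hempty _ (mul_pos ht0 hx0), hempty _ hx0]
        simp
      · have hset : ∀ z : ℝ, {v : ℝ | v * w > z ∧ w ≤ r} = Ioi (z / w) := by
          intro z; ext v
          simp only [mem_setOf_eq, mem_Ioi, hwr, and_true]
          rw [div_lt_iff₀ hw]
        have hu : uF ≤ x / w := by
          have h1 : x / r ≤ x / w := div_le_div_of_nonneg_left hx0.le hw hwr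
          rw [hxr] at h1; linarith
        have h2 := huF (x / w) hu
        rw [hset, hset, hYIoi, hYIoi, mul_div_assoc]
        exact h2
    · have hempty : ∀ z : ℝ, {v : ℝ | v * w > z ∧ w ≤ r} = ∅ := by
        intro z; ext v; simp [hwr]
      rw [hempty, hempty]; simp
  -- pointwise comparisons for the E2 integrand
  have hpt2 : ∀ y : ℝ, 0 ≤ y →
      ((μ.map Y') {w | y * w > t * x ∧ r < w ∧ y ≤ r}
        ≤ ENNReal.ofReal (t ^ (-α') + ε/2) * (μ.map Y') {w | y * w > x ∧ r < w ∧ y ≤ r}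
      ∧ ENNReal.ofReal (t ^ (-α') - ε/2) * (μ.map Y') {w | y * w > x ∧ r < w ∧ y ≤ r}
        ≤ (μ.map Y') {w | y * w > t * x ∧ r < w ∧ y ≤ r}) := by
    intro y hy0
    by_cases hyr : y ≤ r
    · rcases eq_or_lt_of_le hy0 with hy | hy
      · have hempty : ∀ z : ℝ, 0 < z → {w : ℝ | y * w > z ∧ r < w ∧ y ≤ r} = ∅ := by
          intro z hz; ext w
          simp [← hy, hz.not_gt, not_lt.mpr hz.le]
        rw [hempty _ (mul_pos ht0 hx0), hempty _ hx0]
        simp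
      · have hxyr : r ≤ x / y := by
          have h1 : x / r ≤ x / y := div_le_div_of_nonneg_left hx0.le hy hyr
          rw [hxr] at h1; linarith
        have hset : ∀ z : ℝ, x ≤ z → {w : ℝ | y * w > z ∧ r < w ∧ y ≤ r} = Ioi (z / y) := by
          intro z hxz; ext w
          simp only [mem_setOf_eq, mem_Ioi, hyr, and_true]
          constructor
          · rintro ⟨h1, _⟩
            rw [div_lt_iff₀ hy, mul_comm]; exact h1
          · intro h1
            have hzy : r ≤ z / y := le_trans hxyr (by gcongr)
            constructor
            · rw [div_lt_iff₀ hy] at h1; linarith [h1]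
            · linarith
        have hu : uG ≤ x / y := by linarith [hruG, hxyr]
        have h2 := huG (x / y) hu
        rw [hset _ (le_refl x), hset _ (by nlinarith : x ≤ t * x), hY'Ioi, hY'Ioi, mul_div_assoc]
        exact h2
    · have hempty : ∀ z : ℝ, {w : ℝ | y * w > z ∧ r < w ∧ y ≤ r} = ∅ := by
        intro z; ext w; simp [hyr]
      rw [hempty, hempty]; simp
  -- integrated comparisons
  have hup1 : μ {ω | Y ω * Y' ω > t * x ∧ Y' ω ≤ r}
      ≤ ENNReal.ofReal (t ^ (-α') + ε/2) * μ {ω | Y ω * Y' ω > x ∧ Y' ω ≤ r} := by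
    rw [hrep1, hrep1, ← lintegral_const_mul _ (hmeas1 x)]
    exact lintegral_mono_ae (haeY'.mono fun w hw => (hpt1 w hw).1)
  have hlo1 : ENNReal.ofReal (t ^ (-α') - ε/2) * μ {ω | Y ω * Y' ω > x ∧ Y' ω ≤ r}
      ≤ μ {ω | Y ω * Y' ω > t * x ∧ Y' ω ≤ r} := by
    rw [hrep1, hrep1, ← lintegral_const_mul _ (hmeas1 x)]
    exact lintegral_mono_ae (haeY'.mono fun w hw => (hpt1 w hw).2)
  have hup2 : μ {ω | Y ω * Y' ω > t * x ∧ r < Y' ω ∧ Y ω ≤ r}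
      ≤ ENNReal.ofReal (t ^ (-α') + ε/2) * μ {ω | Y ω * Y' ω > x ∧ r < Y' ω ∧ Y ω ≤ r} := by
    rw [hrep2, hrep2, ← lintegral_const_mul _ (hmeas2 x)]
    exact lintegral_mono_ae (haeY.mono fun y hy => (hpt2 y hy).1)
  have hlo2 : ENNReal.ofReal (t ^ (-α') - ε/2) * μ {ω | Y ω * Y' ω > x ∧ r < Y' ω ∧ Y ω ≤ r}
      ≤ μ {ω | Y ω * Y' ω > t * x ∧ r < Y' ω ∧ Y ω ≤ r} := by
    rw [hrep2, hrep2, ← lintegral_const_mul _ (hmeas2 x)]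
    exact lintegral_mono_ae (haeY.mono fun y hy => (hpt2 y hy).2)
  -- event measurabilities
  have hm1 : ∀ z : ℝ, MeasurableSet {ω | Y ω * Y' ω > z ∧ Y' ω ≤ r} := fun z =>
    (measurableSet_lt measurable_const (hY.mul hY')).inter
      (measurableSet_le hY' measurable_const)
  have hm2 : ∀ z : ℝ, MeasurableSet {ω | Y ω * Y' ω > z ∧ r < Y' ω ∧ Y ω ≤ r} := fun z =>
    (measurableSet_lt measurable_const (hY.mul hY')).inter
      ((measurableSet_lt measurable_const hY').inter (measurableSet_le hY measurable_const))
  have hm3 : MeasurableSet {ω | r < Y ω ∧ r < Y' ω} :=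
    (measurableSet_lt measurable_const hY).inter (measurableSet_lt measurable_const hY')
  -- E3 as a product
  have hprodE3 : μ {ω | r < Y ω ∧ r < Y' ω} = μ {ω | Y ω > r} * μ {ω | Y' ω > r} := by
    have he : {ω | r < Y ω ∧ r < Y' ω}
        = (fun ω => (Y ω, Y' ω)) ⁻¹' ((Ioi r) ×ˢ (Ioi r)) := rfl
    rw [he, ← Measure.map_apply (hY.prodMk hY') (measurableSet_Ioi.prod measurableSet_Ioi),
      hmap, Measure.prod_prod, hYIoi, hY'Ioi]
  have hE3small : μ {ω | r < Y ω ∧ r < Y' ω}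
      ≤ ENNReal.ofReal (ε/2) * μ {ω | Y ω * Y' ω > x} := by
    rw [hprodE3]; exact hCx
  have hrr : r * r = x := Real.mul_self_sqrt hx0.le
  -- splitting identity at level x
  have hdisj23 : ∀ z : ℝ, Disjoint {ω | Y ω * Y' ω > z ∧ r < Y' ω ∧ Y ω ≤ r}
      {ω | r < Y ω ∧ r < Y' ω} := by
    intro z
    apply Set.disjoint_left.mpr
    rintro ω ⟨_, _, h1⟩ ⟨h2, _⟩
    exact absurd (lt_of_le_of_lt h1 h2) (lt_irrefl _)
  have hdisj12 : ∀ z z' : ℝ, Disjoint {ω | Y ω * Y' ω > z ∧ Y' ω ≤ r}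
      ({ω | Y ω * Y' ω > z' ∧ r < Y' ω ∧ Y ω ≤ r} ∪ {ω | r < Y ω ∧ r < Y' ω}) := by
    intro z z'
    apply Set.disjoint_left.mpr
    rintro ω ⟨_, h1⟩ (⟨_, h2, _⟩ | ⟨_, h2⟩) <;>
      exact absurd (lt_of_le_of_lt h1 h2) (lt_irrefl _)
  have hcover : ∀ z : ℝ, 0 < z → r * r ≤ z → {ω | Y ω * Y' ω > z}
      ⊆ {ω | Y ω * Y' ω > z ∧ Y' ω ≤ r}
        ∪ ({ω | Y ω * Y' ω > z ∧ r < Y' ω ∧ Y ω ≤ r} ∪ {ω | r < Y ω ∧ r < Y' ω}) := by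
    intro z hz hrz ω hω
    by_cases h1 : Y' ω ≤ r
    · exact Or.inl ⟨hω, h1⟩
    · push_neg at h1
      by_cases h2 : Y ω ≤ r
      · exact Or.inr (Or.inl ⟨hω, h1, h2⟩)
      · push_neg at h2
        exact Or.inr (Or.inr ⟨h2, h1⟩)
  have hcover' : {ω | Y ω * Y' ω > x}
      = {ω | Y ω * Y' ω > x ∧ Y' ω ≤ r}
        ∪ ({ω | Y ω * Y' ω > x ∧ r < Y' ω ∧ Y ω ≤ r} ∪ {ω | r < Y ω ∧ r < Y' ω}) := by
    apply Set.Subset.antisymm (hcover x hx0 hrr.le)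
    rintro ω (⟨h, _⟩ | (⟨h, _⟩ | ⟨h1, h2⟩))
    · exact h
    · exact h
    · show x < Y ω * Y' ω
      calc x = r * r := hrr.symm
        _ < Y ω * Y' ω := mul_lt_mul'' h1 h2 hr0.le hr0.le
  have hident : μ {ω | Y ω * Y' ω > x ∧ Y' ω ≤ r}
      + (μ {ω | Y ω * Y' ω > x ∧ r < Y' ω ∧ Y ω ≤ r} + μ {ω | r < Y ω ∧ r < Y' ω})
      = μ {ω | Y ω * Y' ω > x} := by
    rw [← measure_union (hdisj23 x) hm3, ← measure_union (hdisj12 x x) ((hm2 x).union hm3),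
      ← hcover']
  have h12le : μ {ω | Y ω * Y' ω > x ∧ Y' ω ≤ r}
      + μ {ω | Y ω * Y' ω > x ∧ r < Y' ω ∧ Y ω ≤ r} ≤ μ {ω | Y ω * Y' ω > x} := by
    rw [← hident, ← add_assoc]
    exact le_self_add
  constructor
  · -- upper bound
    have hxtx : r * r ≤ t * x := by nlinarith
    have h1 : μ {ω | Y ω * Y' ω > t * x}
        ≤ μ {ω | Y ω * Y' ω > t * x ∧ Y' ω ≤ r}
          + (μ {ω | Y ω * Y' ω > t * x ∧ r < Y' ω ∧ Y ω ≤ r}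
            + μ {ω | r < Y ω ∧ r < Y' ω}) :=
      le_trans (measure_mono (hcover (t*x) (mul_pos ht0 hx0) hxtx))
        (le_trans (measure_union_le _ _) (add_le_add_right (measure_union_le _ _) _))
    have hofadd : ENNReal.ofReal (t ^ (-α') + ε/2) + ENNReal.ofReal (ε/2)
        = ENNReal.ofReal (t ^ (-α') + ε) := by
      rw [← ENNReal.ofReal_add (by positivity) (by positivity)]
      ring_nf
    calc μ {ω | Y ω * Y' ω > t * x}
        ≤ μ {ω | Y ω * Y' ω > t * x ∧ Y' ω ≤ r}
          + (μ {ω | Y ω * Y' ω > t * x ∧ r < Y' ω ∧ Y ω ≤ r}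
            + μ {ω | r < Y ω ∧ r < Y' ω}) := h1
      _ ≤ ENNReal.ofReal (t ^ (-α') + ε/2) * μ {ω | Y ω * Y' ω > x ∧ Y' ω ≤ r}
          + (ENNReal.ofReal (t ^ (-α') + ε/2) * μ {ω | Y ω * Y' ω > x ∧ r < Y' ω ∧ Y ω ≤ r}
            + ENNReal.ofReal (ε/2) * μ {ω | Y ω * Y' ω > x}) :=
        add_le_add hup1 (add_le_add hup2 hE3small)
      _ = ENNReal.ofReal (t ^ (-α') + ε/2)
            * (μ {ω | Y ω * Y' ω > x ∧ Y' ω ≤ r}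
              + μ {ω | Y ω * Y' ω > x ∧ r < Y' ω ∧ Y ω ≤ r})
          + ENNReal.ofReal (ε/2) * μ {ω | Y ω * Y' ω > x} := by ring
      _ ≤ ENNReal.ofReal (t ^ (-α') + ε/2) * μ {ω | Y ω * Y' ω > x}
          + ENNReal.ofReal (ε/2) * μ {ω | Y ω * Y' ω > x} :=
        add_le_add_left (mul_le_mul_right h12le _) _
      _ = ENNReal.ofReal (t ^ (-α') + ε) * μ {ω | Y ω * Y' ω > x} := by
        rw [← add_mul, hofadd]
  · -- lower bound
    rcases le_or_gt (t ^ (-α') - ε) 0 with hneg | hnn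
    · rw [ENNReal.ofReal_eq_zero.mpr hneg, zero_mul]
      exact zero_le
    have hdisj12t : Disjoint {ω | Y ω * Y' ω > t * x ∧ Y' ω ≤ r}
        {ω | Y ω * Y' ω > t * x ∧ r < Y' ω ∧ Y ω ≤ r} := by
      apply Set.disjoint_left.mpr
      rintro ω ⟨_, h1⟩ ⟨_, h2, _⟩
      exact absurd (lt_of_le_of_lt h1 h2) (lt_irrefl _)
    have hloT : μ {ω | Y ω * Y' ω > t * x ∧ Y' ω ≤ r}
        + μ {ω | Y ω * Y' ω > t * x ∧ r < Y' ω ∧ Y ω ≤ r}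
        ≤ μ {ω | Y ω * Y' ω > t * x} := by
      rw [← measure_union hdisj12t (hm2 (t*x))]
      apply measure_mono
      rintro ω (⟨h, _⟩ | ⟨h, _⟩) <;> exact h
    have hKle1 : ENNReal.ofReal (t ^ (-α') - ε/2) ≤ 1 := by
      rw [← ENNReal.ofReal_one]
      apply ENNReal.ofReal_le_ofReal
      have : t ^ (-α') ≤ 1 := Real.rpow_le_one_of_one_le_of_nonpos ht (by linarith)
      linarith
    have hofadd : ENNReal.ofReal (t ^ (-α') - ε) + ENNReal.ofReal (ε/2)
        = ENNReal.ofReal (t ^ (-α') - ε/2) := by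
      rw [← ENNReal.ofReal_add (by linarith) (by positivity)]
      ring_nf
    have hmain : ENNReal.ofReal (t ^ (-α') - ε/2) * μ {ω | Y ω * Y' ω > x}
        ≤ μ {ω | Y ω * Y' ω > t * x} + ENNReal.ofReal (ε/2) * μ {ω | Y ω * Y' ω > x} := by
      calc ENNReal.ofReal (t ^ (-α') - ε/2) * μ {ω | Y ω * Y' ω > x}
          = ENNReal.ofReal (t ^ (-α') - ε/2)
              * (μ {ω | Y ω * Y' ω > x ∧ Y' ω ≤ r}
                + μ {ω | Y ω * Y' ω > x ∧ r < Y' ω ∧ Y ω ≤ r})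
            + ENNReal.ofReal (t ^ (-α') - ε/2) * μ {ω | r < Y ω ∧ r < Y' ω} := by
            rw [← hident]; ring
        _ ≤ (μ {ω | Y ω * Y' ω > t * x ∧ Y' ω ≤ r}
              + μ {ω | Y ω * Y' ω > t * x ∧ r < Y' ω ∧ Y ω ≤ r})
            + 1 * μ {ω | r < Y ω ∧ r < Y' ω} := by
            apply add_le_add
            · rw [mul_add]
              exact add_le_add hlo1 hlo2
            · exact mul_le_mul_left hKle1 _
        _ ≤ μ {ω | Y ω * Y' ω > t * x} + ENNReal.ofReal (ε/2) * μ {ω | Y ω * Y' ω > x} := by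
            rw [one_mul]
            exact add_le_add hloT hE3small
    have hfin : ENNReal.ofReal (ε/2) * μ {ω | Y ω * Y' ω > x} ≠ ⊤ :=
      ENNReal.mul_ne_top ENNReal.ofReal_ne_top (measure_ne_top μ _)
    apply (ENNReal.add_le_add_iff_right hfin).mp
    rw [← add_mul, hofadd]
    exact hmain

lemma core_all {Ω : Type*} [MeasurableSpace Ω] (μ : Measure Ω) [IsProbabilityMeasure μ]
    (Y Y' : Ω → ℝ) (hY : Measurable Y) (hY' : Measurable Y')
    (hYnn : ∀ ω, 0 ≤ Y ω) (hY'nn : ∀ ω, 0 ≤ Y' ω)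
    (hindep : IndepFun Y Y' μ)
    (α' : ℝ) (hα' : 0 < α') (L L' : ℝ → ℝ) (hL : SlowlyVarying L) (hL' : SlowlyVarying L')
    (htailY : ∀ x : ℝ, 0 < x → μ {ω | Y ω > x} = ENNReal.ofReal (x ^ (-α') * L x))
    (htailY' : ∀ x : ℝ, 0 < x → μ {ω | Y' ω > x} = ENNReal.ofReal (x ^ (-α') * L' x))
    (hTpos : ∀ x : ℝ, 0 < x → μ {ω | Y ω * Y' ω > x} ≠ 0)
    (t ε : ℝ) (ht : 1 ≤ t) (hε : 0 < ε) :
    ∀ᶠ x in atTop,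
      μ {ω | Y ω * Y' ω > t * x} ≤ ENNReal.ofReal (t ^ (-α') + ε) * μ {ω | Y ω * Y' ω > x}
      ∧ ENNReal.ofReal (t ^ (-α') - ε) * μ {ω | Y ω * Y' ω > x}
        ≤ μ {ω | Y ω * Y' ω > t * x} := by
  have hcomm : ∀ z : ℝ, {ω | Y ω * Y' ω > z} = {ω | Y' ω * Y ω > z} := by
    intro z; ext ω; simp [mul_comm]
  by_cases hYb : ∀ x : ℝ, 0 < x → μ {ω | Y ω > x} ≠ 0
  · by_cases hY'b : ∀ x : ℝ, 0 < x → μ {ω | Y' ω > x} ≠ 0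
    · exact core_main μ Y Y' hY hY' hYnn hY'nn hindep α' hα' L L' hL hL'
        htailY htailY' hYb hY'b t ε ht hε
    · push_neg at hY'b
      obtain ⟨x₁, hx₁, hx₁0⟩ := hY'b
      have := core_bounded μ Y' Y hY' hY hY'nn hindep.symm α' hα' L hL htailY hYb
        x₁ hx₁ hx₁0 t ε ht hε
      filter_upwards [this] with x hx
      rw [hcomm (t * x), hcomm x]
      exact hx
  · push_neg at hYb
    obtain ⟨x₀, hx₀, hx₀0⟩ := hYb
    have hY'b : ∀ x : ℝ, 0 < x → μ {ω | Y' ω > x} ≠ 0 := by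
      intro x₁ hx₁
      intro hx₁0
      apply hTpos (x₀ * x₁) (mul_pos hx₀ hx₁)
      have hsub : {ω | Y ω * Y' ω > x₀ * x₁} ⊆ {ω | Y ω > x₀} ∪ {ω | Y' ω > x₁} := by
        intro ω hω
        by_contra hcon
        simp only [mem_union, mem_setOf_eq, not_or, not_lt] at hcon
        obtain ⟨h1, h2⟩ := hcon
        have : Y ω * Y' ω ≤ x₀ * x₁ := mul_le_mul h1 h2 (hY'nn ω) hx₀.le
        exact absurd (lt_of_lt_of_le hω this) (lt_irrefl _)
      have h0 : μ {ω | Y ω * Y' ω > x₀ * x₁} ≤ 0 := by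
        calc μ {ω | Y ω * Y' ω > x₀ * x₁} ≤ μ ({ω | Y ω > x₀} ∪ {ω | Y' ω > x₁}) :=
            measure_mono hsub
          _ ≤ μ {ω | Y ω > x₀} + μ {ω | Y' ω > x₁} := measure_union_le _ _
          _ = 0 := by rw [hx₀0, hx₁0, add_zero]
      exact le_antisymm h0 (by positivity)
    exact core_bounded μ Y Y' hY hY' hYnn hindep α' hα' L' hL' htailY' hY'b
      x₀ hx₀ hx₀0 t ε ht hε

set_option maxHeartbeats 1000000 in
/-- Embrechts–Goldie: if `Y` and `Y'` are independent nonnegative random variables, both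
regularly varying with index `α' > 0`, then the product `Y Y'` is regularly varying with
the same index: `P(Y Y' > x) = x^(-α') L₁(x)` for some slowly varying `L₁`. -/
theorem product_regularly_varying {Ω : Type*} [MeasurableSpace Ω] (μ : Measure Ω)
    [IsProbabilityMeasure μ] (Y Y' : Ω → ℝ) (hY : Measurable Y) (hY' : Measurable Y')
    (hYnn : ∀ ω, 0 ≤ Y ω) (hY'nn : ∀ ω, 0 ≤ Y' ω)
    (hindep : IndepFun Y Y' μ)
    (α' : ℝ) (hα' : 0 < α') (L L' : ℝ → ℝ) (hL : SlowlyVarying L) (hL' : SlowlyVarying L')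
    (htailY : ∀ x : ℝ, 0 < x → μ {ω | Y ω > x} = ENNReal.ofReal (x ^ (-α') * L x))
    (htailY' : ∀ x : ℝ, 0 < x → μ {ω | Y' ω > x} = ENNReal.ofReal (x ^ (-α') * L' x)) :
    ∃ L₁ : ℝ → ℝ, SlowlyVarying L₁ ∧
      ∀ x : ℝ, 0 < x → μ {ω | Y ω * Y' ω > x} = ENNReal.ofReal (x ^ (-α') * L₁ x) := by
  classical
  set L₁ : ℝ → ℝ := fun x =>
    if 0 < x ∧ μ {ω | Y ω * Y' ω > x} ≠ 0
    then x ^ α' * (μ {ω | Y ω * Y' ω > x}).toReal else -1 with hL₁def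
  have htails : ∀ x : ℝ, 0 < x → μ {ω | Y ω * Y' ω > x} ≠ 0 →
      μ {ω | Y ω * Y' ω > x} = ENNReal.ofReal (x ^ (-α') * L₁ x) := by
    intro x hx0 hxne
    have hcond : 0 < x ∧ μ {ω | Y ω * Y' ω > x} ≠ 0 := ⟨hx0, hxne⟩
    rw [hL₁def]
    simp only [if_pos hcond]
    have hxa : x ^ (-α') * (x ^ α' * (μ {ω | Y ω * Y' ω > x}).toReal)
        = (μ {ω | Y ω * Y' ω > x}).toReal := by
      rw [← mul_assoc, ← Real.rpow_add hx0]
      simp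
    rw [hxa, ENNReal.ofReal_toReal (measure_ne_top μ _)]
  have htail0 : ∀ x : ℝ, 0 < x → μ {ω | Y ω * Y' ω > x} = 0 →
      μ {ω | Y ω * Y' ω > x} = ENNReal.ofReal (x ^ (-α') * L₁ x) := by
    intro x hx0 hxz
    have hneg : ¬ (0 < x ∧ μ {ω | Y ω * Y' ω > x} ≠ 0) := by
      rintro ⟨_, h⟩; exact h hxz
    rw [hL₁def]
    simp only [if_neg hneg]
    rw [hxz]
    symm
    rw [ENNReal.ofReal_eq_zero]
    have : (0:ℝ) < x ^ (-α') := Real.rpow_pos_of_pos hx0 _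
    nlinarith
  by_cases hZ : ∃ x₂ : ℝ, 0 < x₂ ∧ μ {ω | Y ω * Y' ω > x₂} = 0
  · -- eventually-zero case
    obtain ⟨x₂, hx₂0, hx₂z⟩ := hZ
    have hzero : ∀ x : ℝ, x₂ ≤ x → μ {ω | Y ω * Y' ω > x} = 0 := by
      intro x hx
      apply le_antisymm _ (by positivity)
      rw [← hx₂z]
      apply measure_mono
      intro ω hω
      exact lt_of_le_of_lt hx hω
    refine ⟨L₁, ?_, ?_⟩
    · intro t ht0
      have heq : (fun x => L₁ (t * x) / L₁ x) =ᶠ[atTop] (fun _ => (1:ℝ)) := by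
        filter_upwards [eventually_ge_atTop (max x₂ (x₂ / t)), eventually_gt_atTop 0]
          with x hx hx0
        have h1 : x₂ ≤ x := le_trans (le_max_left _ _) hx
        have h2 : x₂ ≤ t * x := by
          have h3 : x₂ / t ≤ x := le_trans (le_max_right _ _) hx
          rw [div_le_iff₀ ht0] at h3
          linarith [h3]
        have hn1 : ¬ (0 < x ∧ μ {ω | Y ω * Y' ω > x} ≠ 0) := by
          rintro ⟨_, h⟩; exact h (hzero x h1)
        have hn2 : ¬ (0 < t * x ∧ μ {ω | Y ω * Y' ω > t * x} ≠ 0) := by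
          rintro ⟨_, h⟩; exact h (hzero (t * x) h2)
        show L₁ (t * x) / L₁ x = 1
        rw [hL₁def]
        simp only [if_neg hn1, if_neg hn2]
        norm_num
      exact Tendsto.congr' heq.symm tendsto_const_nhds
    · intro x hx0
      by_cases hxz : μ {ω | Y ω * Y' ω > x} = 0
      · exact htail0 x hx0 hxz
      · exact htails x hx0 hxz
  · -- positive-tail case
    push_neg at hZ
    have hTpos : ∀ x : ℝ, 0 < x → μ {ω | Y ω * Y' ω > x} ≠ 0 := hZ
    set τ : ℝ → ℝ := fun x => (μ {ω | Y ω * Y' ω > x}).toReal with hτdef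
    have hτpos : ∀ x : ℝ, 0 < x → 0 < τ x := by
      intro x hx0
      exact ENNReal.toReal_pos (hTpos x hx0) (measure_ne_top μ _)
    have Hratio1 : ∀ t : ℝ, 1 ≤ t →
        Tendsto (fun x => τ (t * x) / τ x) atTop (nhds (t ^ (-α'))) := by
      intro t ht
      have ht0 : (0:ℝ) < t := lt_of_lt_of_le one_pos ht
      rw [Metric.tendsto_nhds]
      intro ε hε
      have hcore := core_all μ Y Y' hY hY' hYnn hY'nn hindep α' hα' L L' hL hL'
        htailY htailY' hTpos t (ε/2) ht (half_pos hε)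
      filter_upwards [hcore, eventually_gt_atTop 0] with x hx hx0
      obtain ⟨hub, hlb⟩ := hx
      have hτx := hτpos x hx0
      have h1 : τ (t * x) ≤ (t ^ (-α') + ε/2) * τ x := by
        have := ENNReal.toReal_mono (ENNReal.mul_ne_top ENNReal.ofReal_ne_top
          (measure_ne_top μ _)) hub
        rwa [ENNReal.toReal_mul, ENNReal.toReal_ofReal (by positivity)] at this
      have h2 : (t ^ (-α') - ε/2) * τ x ≤ τ (t * x) := by
        rcases le_or_gt (t ^ (-α') - ε/2) 0 with hc | hc
        · calc (t ^ (-α') - ε/2) * τ x ≤ 0 := mul_nonpos_of_nonpos_of_nonneg hc hτx.le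
            _ ≤ τ (t * x) := ENNReal.toReal_nonneg
        · have := ENNReal.toReal_mono (measure_ne_top μ _) hlb
          rwa [ENNReal.toReal_mul, ENNReal.toReal_ofReal hc.le] at this
      rw [Real.dist_eq, abs_lt]
      constructor
      · have := (le_div_iff₀ hτx).mpr h2
        linarith
      · have := (div_le_iff₀ hτx).mpr h1
        linarith
    have Hratio : ∀ t : ℝ, 0 < t →
        Tendsto (fun x => τ (t * x) / τ x) atTop (nhds (t ^ (-α'))) := by
      intro t ht0
      rcases le_or_gt 1 t with h1 | h1
      · exact Hratio1 t h1
      · have hinv : 1 ≤ 1 / t := by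
          rw [le_div_iff₀ ht0]; linarith
        have h2 := Hratio1 (1 / t) hinv
        have hmulT : Tendsto (fun x : ℝ => t * x) atTop atTop :=
          Tendsto.const_mul_atTop ht0 tendsto_id
        have hcomp := h2.comp hmulT
        have hfun : ((fun x => τ ((1/t) * x) / τ x) ∘ (fun x : ℝ => t * x))
            = fun x => τ x / τ (t * x) := by
          funext x
          simp only [Function.comp_apply]
          congr 2
          field_simp
        rw [hfun] at hcomp
        have hlim : ((1/t) ^ (-α'))⁻¹ = t ^ (-α') := by
          rw [one_div, Real.inv_rpow ht0.le, inv_inv]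
        have hinv2 := hcomp.inv₀ (ne_of_gt (Real.rpow_pos_of_pos (by positivity) _))
        rw [hlim] at hinv2
        have hfun2 : (fun x => (τ x / τ (t * x))⁻¹) = fun x => τ (t * x) / τ x := by
          funext x; rw [inv_div]
        rwa [hfun2] at hinv2
    refine ⟨L₁, ?_, ?_⟩
    · intro t ht0
      have heq : (fun x => L₁ (t * x) / L₁ x)
          =ᶠ[atTop] (fun x => t ^ α' * (τ (t * x) / τ x)) := by
        filter_upwards [eventually_gt_atTop 0] with x hx0
        have htx0 : 0 < t * x := mul_pos ht0 hx0
        have hτx := (hτpos x hx0).ne'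
        have hxα : x ^ α' ≠ 0 := (Real.rpow_pos_of_pos hx0 _).ne'
        show L₁ (t * x) / L₁ x = t ^ α' * (τ (t * x) / τ x)
        have hcond1 : 0 < x ∧ μ {ω | Y ω * Y' ω > x} ≠ 0 := ⟨hx0, hTpos x hx0⟩
        have hcond2 : 0 < t * x ∧ μ {ω | Y ω * Y' ω > t * x} ≠ 0 := ⟨htx0, hTpos (t*x) htx0⟩
        rw [hL₁def]
        simp only [if_pos hcond1, if_pos hcond2]
        rw [Real.mul_rpow ht0.le hx0.le]
        field_simp
        change (μ {ω | t * x < Y ω * Y' ω}).toReal * τ x * (τ x)⁻¹ = τ (t * x)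
        rw [mul_assoc, mul_inv_cancel₀ hτx, mul_one]
      have hone : t ^ α' * t ^ (-α') = 1 := by
        rw [← Real.rpow_add ht0]; simp
      have h3 : Tendsto (fun x => t ^ α' * (τ (t * x) / τ x)) atTop
          (nhds (t ^ α' * t ^ (-α'))) := tendsto_const_nhds.mul (Hratio t ht0)
      rw [hone] at h3
      exact h3.congr' heq.symm
    · intro x hx0
      exact htails x hx0 (hTpos x hx0)
end

section
/- Let $f_\gamma(x) = \frac{1}{2\pi x \gamma}\sqrt{(b-x)(x-a)}$ for $a \le x \le b$ and $f_\gamma(x) = 0$ otherwise, where $a = (1-\sqrt\gamma)^2$, $b = (1+\sqrt\gamma)^2$, and $\gamma \in (0,1]$. Then $\int_a^b f_\gamma(x)\,dx = 1$, i.e., the Marčenko–Pastur density integrates to one. -/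
open MeasureTheory Real Set

lemma mp_FTC (m r s : ℝ) (hr : 0 < r) (hs : 0 ≤ s) (ha0 : 0 ≤ m - r)
    (hss : s ^ 2 = m ^ 2 - r ^ 2) :
    ∫ x in (m - r)..(m + r), Real.sqrt ((m + r - x) * (x - (m - r))) / x
      = Real.pi * (m - s) := by
  have hm0 : 0 < m := lt_of_lt_of_le hr (by linarith)
  set F : ℝ → ℝ := fun x => Real.sqrt ((m + r - x) * (x - (m - r)))
      + m * Real.arcsin ((x - m) / r) - s * Real.arcsin ((m * x - s ^ 2) / (r * x))
    with hF
  -- continuity of F on [m-r, m+r]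
  have hc1 : Continuous fun x : ℝ => Real.sqrt ((m + r - x) * (x - (m - r))) := by
    exact Real.continuous_sqrt.comp (by continuity)
  have hc2 : Continuous fun x : ℝ => m * Real.arcsin ((x - m) / r) := by
    exact continuous_const.mul (Real.continuous_arcsin.comp (by continuity))
  have hc3 : ContinuousOn (fun x : ℝ => s * Real.arcsin ((m * x - s ^ 2) / (r * x)))
      (Icc (m - r) (m + r)) := by
    rcases hs.eq_or_lt with hs0 | hs0
    · simp only [← hs0, zero_mul]
      exact continuousOn_const
    · have har : 0 < m - r := by
        rcases ha0.eq_or_lt with h | h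
        · exfalso; nlinarith
        · exact h
      refine continuousOn_const.mul (Real.continuous_arcsin.comp_continuousOn ?_)
      refine ContinuousOn.div (by fun_prop) (by fun_prop) ?_
      intro x hx
      have : 0 < x := lt_of_lt_of_le har hx.1
      positivity
  have hFc : ContinuousOn F (Icc (m - r) (m + r)) :=
    ((hc1.continuousOn.add hc2.continuousOn).sub hc3)
  -- derivative of F on (m-r, m+r)
  have hderiv : ∀ x ∈ Ioo (m - r) (m + r),
      HasDerivAt F (Real.sqrt ((m + r - x) * (x - (m - r))) / x) x := by
    intro x hx
    have hx0 : 0 < x := lt_of_le_of_lt ha0 hx.1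
    have hQ : 0 < (m + r - x) * (x - (m - r)) :=
      mul_pos (by linarith [hx.2]) (by linarith [hx.1])
    set Q : ℝ := (m + r - x) * (x - (m - r)) with hQdef
    have hsQ : 0 < Real.sqrt Q := Real.sqrt_pos.mpr hQ
    have hQsq : Real.sqrt Q ^ 2 = Q := Real.sq_sqrt hQ.le
    -- term 1
    have d0 : HasDerivAt (fun y : ℝ => (m + r - y) * (y - (m - r))) (2 * (m - x)) x := by
      have h := ((hasDerivAt_const x (m + r)).sub (hasDerivAt_id x)).mul
        ((hasDerivAt_id x).sub_const (m - r))
      exact h.congr_deriv (by simp only [id_eq, Pi.sub_apply]; ring)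
    have T1 : HasDerivAt (fun y : ℝ => Real.sqrt ((m + r - y) * (y - (m - r))))
        ((m - x) / Real.sqrt Q) x := by
      have h := (Real.hasDerivAt_sqrt hQ.ne').comp x d0
      have he : (m - x) / Real.sqrt Q = 1 / (2 * Real.sqrt Q) * (2 * (m - x)) := by
        field_simp
      rw [he]
      exact h
    -- term 2
    have hy1 : (x - m) / r < 1 := by rw [div_lt_one hr]; linarith [hx.2]
    have hy2 : -1 < (x - m) / r := by rw [lt_div_iff₀ hr]; linarith [hx.1]
    have dInner : HasDerivAt (fun y : ℝ => (y - m) / r) (1 / r) x := by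
      simpa using ((hasDerivAt_id x).sub_const m).div_const r
    have dArc := (Real.hasDerivAt_arcsin hy2.ne' hy1.ne).comp x dInner
    have hroot : Real.sqrt (1 - ((x - m) / r) ^ 2) = Real.sqrt Q / r := by
      have h1 : 1 - ((x - m) / r) ^ 2 = Q / r ^ 2 := by
        rw [hQdef]; field_simp; ring
      rw [h1, Real.sqrt_div hQ.le, Real.sqrt_sq hr.le]
    have T2 : HasDerivAt (fun y : ℝ => m * Real.arcsin ((y - m) / r))
        (m / Real.sqrt Q) x := by
      have h := dArc.const_mul m
      have he : m / Real.sqrt Q = m * (1 / Real.sqrt (1 - ((x - m) / r) ^ 2) * (1 / r)) := by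
        rw [hroot]; field_simp
      rw [he]
      exact h
    -- term 3
    have T3 : HasDerivAt (fun y : ℝ => s * Real.arcsin ((m * y - s ^ 2) / (r * y)))
        (s ^ 2 / (x * Real.sqrt Q)) x := by
      rcases hs.eq_or_lt with hs0 | hs0
      · simp only [← hs0, zero_mul, zero_pow, ne_eq, OfNat.ofNat_ne_zero,
          not_false_iff, zero_div]
        exact hasDerivAt_const x 0
      · have key : 1 - ((m * x - s ^ 2) / (r * x)) ^ 2 = s ^ 2 * Q / (r * x) ^ 2 := by
          rw [hQdef]
          field_simp
          linear_combination (x ^ 2 - s ^ 2) * hss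
        have hpos : 0 < 1 - ((m * x - s ^ 2) / (r * x)) ^ 2 := by
          rw [key]; positivity
        have hu1 : (m * x - s ^ 2) / (r * x) ≠ 1 := by
          intro h; rw [h] at hpos; norm_num at hpos
        have hu2 : (m * x - s ^ 2) / (r * x) ≠ -1 := by
          intro h; rw [h] at hpos; norm_num at hpos
        have dInner2 : HasDerivAt (fun y : ℝ => (m * y - s ^ 2) / (r * y))
            (s ^ 2 / (r * x ^ 2)) x := by
          have h := (((hasDerivAt_id x).const_mul m).sub_const (s ^ 2)).div
            ((hasDerivAt_id x).const_mul r) (by positivity)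
          exact h.congr_deriv (by
            simp only [id_eq]
            rw [div_eq_div_iff (by positivity) (by positivity)]
            ring)
        have dArc2 := (Real.hasDerivAt_arcsin hu2 hu1).comp x dInner2
        have hroot2 : Real.sqrt (1 - ((m * x - s ^ 2) / (r * x)) ^ 2)
            = s * Real.sqrt Q / (r * x) := by
          rw [key, Real.sqrt_div (by positivity), Real.sqrt_mul (by positivity),
            Real.sqrt_sq hs0.le, Real.sqrt_sq (by positivity)]
        have h := dArc2.const_mul s
        have he : s ^ 2 / (x * Real.sqrt Q)
            = s * (1 / Real.sqrt (1 - ((m * x - s ^ 2) / (r * x)) ^ 2)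
              * (s ^ 2 / (r * x ^ 2))) := by
          rw [hroot2]; field_simp
        rw [he]
        exact h
    have total := (T1.add T2).sub T3
    have he : Real.sqrt ((m + r - x) * (x - (m - r))) / x
        = (m - x) / Real.sqrt Q + m / Real.sqrt Q - s ^ 2 / (x * Real.sqrt Q) := by
      rw [← hQdef]
      have hQsq' : Real.sqrt Q ^ 2 = (m + r - x) * (x - (m - r)) := by rw [hQsq]
      field_simp
      linear_combination hQsq' + hss
    rw [hF, he]
    exact total
  -- integrability
  have hint : IntervalIntegrable
      (fun x => Real.sqrt ((m + r - x) * (x - (m - r))) / x) volume (m - r) (m + r) := by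
    rcases ha0.eq_or_lt with h0 | h0
    · -- m = r, singular endpoint at 0
      have hmr : m = r := by linarith
      have hb2 : m + r = 2 * r := by linarith
      have big : IntervalIntegrable (fun x : ℝ => Real.sqrt (2 * r) * x ^ (-(1/2) : ℝ))
          volume (m - r) (m + r) := by
        exact (intervalIntegral.intervalIntegrable_rpow' (by norm_num)).const_mul _
      refine big.mono_fun ?_ ?_
      · apply Measurable.aestronglyMeasurable
        fun_prop
      · filter_upwards [ae_restrict_mem measurableSet_uIoc] with x hx
        rw [uIoc_of_le (by linarith), ← h0, hb2] at hx
        have hx0 : 0 < x := hx.1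
        have hxb : x ≤ 2 * r := hx.2
        have h1 : Real.sqrt ((m + r - x) * (x - (m - r))) ≤ Real.sqrt (2 * r) * Real.sqrt x := by
          rw [← Real.sqrt_mul (by positivity)]
          apply Real.sqrt_le_sqrt
          rw [← h0, hb2]
          nlinarith
        have h2 : Real.sqrt x / x = x ^ (-(1/2) : ℝ) := by
          rw [Real.rpow_neg hx0.le, ← Real.sqrt_eq_rpow, eq_comm, inv_eq_one_div,
            div_eq_div_iff (Real.sqrt_pos.2 hx0).ne' hx0.ne', one_mul,
            Real.mul_self_sqrt hx0.le]
        rw [Real.norm_of_nonneg (by positivity), Real.norm_of_nonneg (by positivity)]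
        calc Real.sqrt ((m + r - x) * (x - (m - r))) / x
            ≤ Real.sqrt (2 * r) * Real.sqrt x / x := by
              gcongr
          _ = Real.sqrt (2 * r) * (Real.sqrt x / x) := by ring
          _ = Real.sqrt (2 * r) * x ^ (-(1/2) : ℝ) := by rw [h2]
    · -- 0 < m - r : continuous integrand
      apply ContinuousOn.intervalIntegrable
      apply hc1.continuousOn.div continuousOn_id
      intro x hx
      rw [uIcc_of_le (by linarith)] at hx
      exact (lt_of_lt_of_le h0 hx.1).ne'
  rw [intervalIntegral.integral_eq_sub_of_hasDerivAt_of_le (by linarith) hFc hderiv hint]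
  -- evaluate endpoints
  have e1 : ((m + r) - m) / r = 1 := by field_simp; ring
  have e2 : ((m - r) - m) / r = -1 := by field_simp; ring
  have e3 : (m * (m + r) - s ^ 2) / (r * (m + r)) = 1 := by
    rw [div_eq_one_iff_eq (by positivity)]
    linear_combination -hss
  have e4 : s * Real.arcsin ((m * (m - r) - s ^ 2) / (r * (m - r))) = s * (-(π/2)) := by
    rcases ha0.eq_or_lt with h0 | h0
    · have hs0 : s = 0 := by nlinarith
      simp [hs0]
    · have : (m * (m - r) - s ^ 2) / (r * (m - r)) = -1 := by
        rw [div_eq_iff (by positivity)]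
        linear_combination -hss
      rw [this, Real.arcsin_neg, Real.arcsin_one]
  rw [hF]
  simp only [sub_self, zero_mul, mul_zero, Real.sqrt_zero, e1, e2, e3]
  rw [e4, Real.arcsin_one, Real.arcsin_neg, Real.arcsin_one]
  ring

/-- The Marčenko–Pastur density with ratio parameter `γ ∈ (0,1]`, supported on `[a,b]`
with `a = (1-√γ)²` and `b = (1+√γ)²`, integrates to one. -/
theorem marcenko_pastur_density_integrates_to_one (γ : ℝ) (hγ : γ ∈ Set.Ioc (0 : ℝ) 1)
    (a b : ℝ) (ha : a = (1 - Real.sqrt γ) ^ 2) (hb : b = (1 + Real.sqrt γ) ^ 2) :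
    ∫ x in a..b, 1 / (2 * Real.pi * x * γ) * Real.sqrt ((b - x) * (x - a)) = 1 := by
  obtain ⟨hγ0, hγ1⟩ := hγ
  have hsq : Real.sqrt γ ^ 2 = γ := Real.sq_sqrt hγ0.le
  have hsγ : 0 < Real.sqrt γ := Real.sqrt_pos.2 hγ0
  have ha' : a = (1 + γ) - 2 * Real.sqrt γ := by rw [ha]; linear_combination hsq
  have hb' : b = (1 + γ) + 2 * Real.sqrt γ := by rw [hb]; linear_combination hsq
  have ha0 : (0:ℝ) ≤ (1 + γ) - 2 * Real.sqrt γ := by rw [← ha', ha]; positivity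
  have key := mp_FTC (1 + γ) (2 * Real.sqrt γ) (1 - γ) (by positivity) (by linarith)
    ha0 (by linear_combination 4 * hsq)
  rw [ha', hb']
  have hpt : ∀ x : ℝ, 1 / (2 * Real.pi * x * γ)
      * Real.sqrt (((1 + γ) + 2 * Real.sqrt γ - x) * (x - ((1 + γ) - 2 * Real.sqrt γ)))
      = (1 / (2 * Real.pi * γ))
      * (Real.sqrt (((1 + γ) + 2 * Real.sqrt γ - x) * (x - ((1 + γ) - 2 * Real.sqrt γ))) / x) :=
    fun x => by ring
  simp_rw [hpt]
  rw [intervalIntegral.integral_const_mul, key]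
  have hπ : Real.pi ≠ 0 := Real.pi_ne_zero
  field_simp
  ring
end
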